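/- Let R be a Noetherian Poisson algebra and N a finitely generated Poisson R-module. Then every associated prime of N is a Poisson ideal of R. -/

import Mathlib

/-- The submodule of elements of `N` killed by `P ^ k`. -/
def torV {R : Type*} [CommRing R] (N : Type*) [AddCommGroup N] [Module R N]
    (P : Ideal R) (k : ℕ) : Submodule R N where
  carrier := {n : N | ∀ q ∈ P ^ k, q • n = 0}
  add_mem' := by
    intro a b ha hb q hq
    simp [smul_add, ha q hq, hb q hq]
  zero_mem' := by intro q hq; simp
  smul_mem' := by
    intro c n hn q hq
    rw [smul_comm, hn q hq, smul_zero]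

theorem mem_torV {R : Type*} [CommRing R] {N : Type*} [AddCommGroup N] [Module R N]
    {P : Ideal R} {k : ℕ} {n : N} : n ∈ torV N P k ↔ ∀ q ∈ P ^ k, q • n = 0 := Iff.rfl

theorem associated_primes_of_poisson_module_are_poisson
    (R : Type*) [CommRing R] [IsNoetherianRing R] [Algebra ℂ R]
    (N : Type*) [AddCommGroup N] [Module R N] [Module ℂ N] [Module.Finite R N]
    (b : R → R → R)
    (hbadd_l : ∀ x y z : R, b (x + y) z = b x z + b y z)
    (hbadd_r : ∀ x y z : R, b x (y + z) = b x y + b x z)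
    (hbsmul_l : ∀ (c : ℂ) (x y : R), b ((algebraMap ℂ R c) * x) y = (algebraMap ℂ R c) * b x y)
    (hbsmul_r : ∀ (c : ℂ) (x y : R), b x ((algebraMap ℂ R c) * y) = (algebraMap ℂ R c) * b x y)
    (hskew : ∀ x y : R, b x y = - b y x)
    (hleib : ∀ x y z : R, b (x * y) z = x * b y z + b x z * y)
    (hjac : ∀ x y z : R, b x (b y z) = b (b x y) z + b y (b x z))
    (bm : R → N → N)
    (hbmadd_l : ∀ (x y : R) (n : N), bm (x + y) n = bm x n + bm y n)
    (hbmadd_r : ∀ (x : R) (n n' : N), bm x (n + n') = bm x n + bm x n')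
    (hbmsmul : ∀ (c : ℂ) (x : R) (n : N), bm x (c • n) = c • bm x n)
    (hbmleib : ∀ (r r' : R) (n : N), bm r (r' • n) = (b r r') • n + r' • bm r n)
    (P : Ideal R) (hP : IsAssociatedPrime P N) :
    ∀ r : R, ∀ x ∈ P, b r x ∈ P := by
  obtain ⟨hPprime, m, hm⟩ := isAssociatedPrime_iff.mp hP
  intro r x hxP
  -- basic properties of the derivation δ = b r
  have hδadd : ∀ u v : R, b r (u + v) = b r u + b r v := hbadd_r r
  have hδzero : b r 0 = 0 := by
    have h := hbadd_r r 0 0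
    rw [add_zero] at h
    exact left_eq_add.mp h
  have hδmul : ∀ u v : R, b r (u * v) = u * b r v + b r u * v := by
    intro u v
    rw [hskew r (u*v), hleib u v r, hskew u r, hskew v r]
    ring
  have hDzero : bm r 0 = 0 := by
    have h := hbmadd_r r 0 0
    rw [add_zero] at h
    exact left_eq_add.mp h
  -- power rule
  have hδpow : ∀ (z : R) (k : ℕ), b r (z ^ (k+1)) = ((k+1 : ℕ) : R) * z ^ k * b r z := by
    intro z k
    induction k with
    | zero => simp
    | succ k ih =>
      have h2 : z ^ (k+1+1) = z * z ^ (k+1) := by ring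
      rw [h2, hδmul, ih]
      push_cast
      ring
  -- δ maps P^(k+1) into P^k
  have hδpowP : ∀ k : ℕ, ∀ q ∈ P ^ (k+1), b r q ∈ P ^ k := by
    intro k
    induction k with
    | zero => intro q _; simp
    | succ k ih =>
      intro q hq
      rw [pow_succ] at hq
      refine Submodule.mul_induction_on hq ?_ ?_
      · intro a ha c hc
        rw [hδmul]
        refine Ideal.add_mem _ ?_ ?_
        · exact Ideal.mul_mem_right _ _ ha
        · rw [pow_succ]
          exact Ideal.mul_mem_mul (ih a ha) hc
      · intro u v hu hv
        rw [hδadd]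
        exact Ideal.add_mem _ hu hv
  -- stabilized torsion submodule
  have hmono : Monotone (torV N P) := by
    intro i j hij n hn q hq
    exact hn q (Ideal.pow_le_pow_right hij hq)
  obtain ⟨L, hL⟩ := monotone_stabilizes_iff_noetherian.mpr inferInstance ⟨torV N P, hmono⟩
  have hstab : torV N P (L+1+1) = torV N P (L+1) := by
    have h1 := hL (L+1) (by omega)
    have h2 := hL (L+1+1) (by omega)
    simp only [OrderHom.coe_mk] at h1 h2
    rw [← h1, ← h2]
  -- m lies in the torsion submodule
  have hmΓ : m ∈ torV N P (L+1) := by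
    rw [mem_torV]
    intro q hq
    have hq1 : q ∈ P := by
      have := Ideal.pow_le_pow_right (show 1 ≤ L+1 by omega) hq
      rwa [pow_one] at this
    rw [hm] at hq1
    exact (Submodule.mem_bot R).mp (Submodule.mem_colon_singleton.mp hq1)
  -- the torsion submodule is stable under bm r
  have hDΓ : ∀ n ∈ torV N P (L+1), bm r n ∈ torV N P (L+1) := by
    intro n hn
    rw [← hstab, mem_torV]
    intro q hq
    rw [pow_succ] at hq
    refine Submodule.mul_induction_on hq ?_ ?_
    · intro i hi j hj
      have h1 := hbmleib r i n
      rw [mem_torV.mp hn i hi, hDzero] at h1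
      have h2 : i • bm r n = -((b r i) • n) :=
        eq_neg_of_add_eq_zero_right h1.symm
      have h3 : b r i ∈ P ^ L := hδpowP L i hi
      have h4 : j * b r i ∈ P ^ (L+1) := by
        rw [mul_comm, pow_succ]
        exact Ideal.mul_mem_mul h3 hj
      calc (i * j) • bm r n = j • (i • bm r n) := by rw [mul_comm, mul_smul]
        _ = j • (-((b r i) • n)) := by rw [h2]
        _ = -((j * b r i) • n) := by rw [smul_neg, mul_smul]
        _ = 0 := by rw [mem_torV.mp hn _ h4, neg_zero]
    · intro u v hu hv
      rw [add_smul, hu, hv, add_zero]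
  -- the annihilator ideal I of the torsion submodule
  set I : Ideal R := (torV N P (L+1)).annihilator with hIdef
  have hIP : I ≤ P := by
    intro z hz
    rw [hIdef, Submodule.mem_annihilator] at hz
    rw [hm, Submodule.mem_colon_singleton, Submodule.mem_bot]
    exact hz m hmΓ
  have hxKI : x ^ (L+1) ∈ I := by
    rw [hIdef, Submodule.mem_annihilator]
    intro γ hγ
    exact mem_torV.mp hγ _ (Ideal.pow_mem_pow hxP (L+1))
  have hIδ : ∀ z ∈ I, b r z ∈ I := by
    intro z hz
    rw [hIdef, Submodule.mem_annihilator] at hz ⊢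
    intro γ hγ
    have h1 := hbmleib r z γ
    rw [hz γ hγ, hDzero] at h1
    have h2 : z • bm r γ = 0 := hz _ (hDΓ γ hγ)
    rw [h2, add_zero] at h1
    exact h1.symm
  -- division by positive integers inside I
  have hdivI : ∀ (k : ℕ) (z : R), ((k+1 : ℕ) : R) * z ∈ I → z ∈ I := by
    intro k z h
    have hc : (((k+1:ℕ) : ℂ)) ≠ 0 := Nat.cast_ne_zero.mpr (Nat.succ_ne_zero k)
    have h3 : (algebraMap ℂ R (((k+1:ℕ) : ℂ))⁻¹) * (((k+1:ℕ) : R) * z) = z := by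
      rw [← mul_assoc, ← map_natCast (algebraMap ℂ R) (k+1), ← map_mul,
        inv_mul_cancel₀ hc, map_one, one_mul]
    rw [← h3]
    exact Ideal.mul_mem_left _ _ h
  -- the Seidenberg induction
  have key : ∀ j : ℕ, j ≤ L → (b r x) ^ (2*j+1) * x ^ (L - j) ∈ I := by
    intro j
    induction j with
    | zero =>
      intro _
      have h1 : b r (x ^ (L+1)) ∈ I := hIδ _ hxKI
      rw [hδpow] at h1
      refine hdivI L _ ?_
      have h2 : ((L+1:ℕ) : R) * ((b r x) ^ (2*0+1) * x ^ (L - 0)) =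
          ((L+1:ℕ) : R) * x ^ L * b r x := by
        simp
        ring
      rw [h2]
      exact h1
    | succ j ih =>
      intro hjL
      have hy := ih (by omega)
      obtain ⟨d, hd⟩ : ∃ d, L - j = d + 1 := ⟨L - j - 1, by omega⟩
      have hdj : L - (j+1) = d := by omega
      have hδy : b r ((b r x) ^ (2*j+1) * x ^ (L - j)) ∈ I := hIδ _ hy
      have hcomp : b r ((b r x) ^ (2*j+1) * x ^ (L - j)) =
          ((2*j+1:ℕ) : R) * (b r x) ^ (2*j) * b r (b r x) * x ^ (L-j)
          + (b r x) ^ (2*j+1) * (((d+1:ℕ) : R) * x ^ d * b r x) := by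
        rw [hδmul, hd, hδpow x d, hδpow (b r x) (2*j)]
        push_cast
        ring
      refine hdivI d _ ?_
      have hmain : ((d+1:ℕ) : R) * ((b r x) ^ (2*(j+1)+1) * x ^ (L - (j+1))) =
          b r x * b r ((b r x) ^ (2*j+1) * x ^ (L - j))
          - ((2*j+1:ℕ) : R) * (b r (b r x) * ((b r x) ^ (2*j+1) * x ^ (L - j))) := by
        rw [hcomp, hd, hdj]
        push_cast
        ring
      rw [hmain]
      exact Ideal.sub_mem _ (Ideal.mul_mem_left _ _ hδy) (Ideal.mul_mem_left _ _ (Ideal.mul_mem_left _ _ hy))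
  have hfin := key L le_rfl
  rw [Nat.sub_self, pow_zero, mul_one] at hfin
  exact hPprime.mem_of_pow_mem _ (hIP hfin)
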